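/- Let K be a field of characteristic 0 and let V = ⊕_{i∈I} V_i be a finite-dimensional K-vector space given as an internal direct sum of subspaces indexed by a finite set I. For j ∈ I write V̂_j = ⊕_{i≠j} V_i, and embed GL(V_j) into GL(V) as the subgroup of invertible linear maps g with g(V_j) = V_j which restrict to the identity on V̂_j. Then for every g ∈ GL(V) and all j, k ∈ I: g GL(V_j) g⁻¹ = GL(V_k) if and only if g(V_j) = V_k and g(V̂_j) = V̂_k. -/

import Mathlib

section

variable {K V : Type*} [Field K] [CharZero K] [AddCommGroup V] [Module K V]
variable {I : Type*} [Fintype I] [DecidableEq I]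

/-- `V̂_j = ⊕_{i ≠ j} V_i`. -/
def hatSubmodule (Vc : I → Submodule K V) (j : I) : Submodule K V :=
  ⨆ (i) (_ : i ≠ j), Vc i

/-- The copy of `GL(V_j)` inside `GL(V)`: all invertible linear maps `g` of `V` with
`g(V_j) = V_j` which restrict to the identity on `V̂_j`. -/
def GLFactor (Vc : I → Submodule K V) (j : I) : Set (V ≃ₗ[K] V) :=
  {g | Submodule.map (g : V →ₗ[K] V) (Vc j) = Vc j ∧ ∀ x ∈ hatSubmodule Vc j, g x = x}

lemma isCompl_hat (Vc : I → Submodule K V) (hinternal : DirectSum.IsInternal Vc) (j : I) :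
    IsCompl (Vc j) (hatSubmodule Vc j) := by
  constructor
  · exact hinternal.submodule_iSupIndep j
  · rw [codisjoint_iff, ← top_le_iff, ← hinternal.submodule_iSup_eq_top]
    refine iSup_le fun i => ?_
    by_cases h : i = j
    · subst h; exact le_sup_left
    · exact le_sup_of_le_right (le_iSup₂ (f := fun i (_ : i ≠ j) => Vc i) i h)

/-- The projection onto `Vc j` along the complement, as an endomorphism of `V`. -/
noncomputable def dblProj (Vc : I → Submodule K V) (j : I)
    (hc : IsCompl (Vc j) (hatSubmodule Vc j)) : V →ₗ[K] V :=
  (Vc j).subtype ∘ₗ (Vc j).linearProjOfIsCompl (hatSubmodule Vc j) hc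

lemma dblProj_mem (Vc : I → Submodule K V) (j : I)
    (hc : IsCompl (Vc j) (hatSubmodule Vc j)) (x : V) : dblProj Vc j hc x ∈ Vc j :=
  ((Vc j).linearProjOfIsCompl (hatSubmodule Vc j) hc x).2

lemma dblProj_left (Vc : I → Submodule K V) (j : I)
    (hc : IsCompl (Vc j) (hatSubmodule Vc j)) {x : V} (hx : x ∈ Vc j) :
    dblProj Vc j hc x = x := by
  have := Submodule.projectionOnto_apply_left hc ⟨x, hx⟩
  exact congrArg (Submodule.subtype _) this

lemma dblProj_right (Vc : I → Submodule K V) (j : I)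
    (hc : IsCompl (Vc j) (hatSubmodule Vc j)) {x : V} (hx : x ∈ hatSubmodule Vc j) :
    dblProj Vc j hc x = 0 := by
  exact (congrArg (Submodule.subtype _) (Submodule.projectionOnto_apply_of_mem_right hc hx)).trans (map_zero _)

lemma dblProj_eq_zero_iff (Vc : I → Submodule K V) (j : I)
    (hc : IsCompl (Vc j) (hatSubmodule Vc j)) {x : V} :
    dblProj Vc j hc x = 0 ↔ x ∈ hatSubmodule Vc j := by
  constructor
  · intro h
    have : (Vc j).linearProjOfIsCompl (hatSubmodule Vc j) hc x = 0 := by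
      exact_mod_cast Subtype.ext (by simpa [dblProj] using h)
    exact (Submodule.linearProjOfIsCompl_apply_eq_zero_iff hc).1 this
  · exact dblProj_right Vc j hc

/-- The "doubling" automorphism: `2` on `Vc j`, the identity on the complement. -/
noncomputable def dbl (Vc : I → Submodule K V) (j : I)
    (hc : IsCompl (Vc j) (hatSubmodule Vc j)) : V ≃ₗ[K] V :=
  LinearEquiv.ofLinear (LinearMap.id + dblProj Vc j hc)
    (LinearMap.id - (2 : K)⁻¹ • dblProj Vc j hc)
    (by
      ext x
      have hpp : dblProj Vc j hc (dblProj Vc j hc x) = dblProj Vc j hc x :=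
        dblProj_left Vc j hc (dblProj_mem Vc j hc x)
      have h2 : (2 : K) ≠ 0 := two_ne_zero
      simp only [LinearMap.comp_apply, LinearMap.add_apply, LinearMap.sub_apply,
        LinearMap.smul_apply, LinearMap.id_apply, map_sub, map_smul, hpp, LinearMap.id_coe,
        id_eq]
      rw [smul_add, ← add_smul]
      norm_num)
    (by
      ext x
      have hpp : dblProj Vc j hc (dblProj Vc j hc x) = dblProj Vc j hc x :=
        dblProj_left Vc j hc (dblProj_mem Vc j hc x)
      simp only [LinearMap.comp_apply, LinearMap.add_apply, LinearMap.sub_apply,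
        LinearMap.smul_apply, LinearMap.id_apply, map_add, map_smul, hpp, LinearMap.id_coe,
        id_eq]
      module)

lemma dbl_apply (Vc : I → Submodule K V) (j : I)
    (hc : IsCompl (Vc j) (hatSubmodule Vc j)) (x : V) :
    dbl Vc j hc x = x + dblProj Vc j hc x := rfl

lemma dbl_mem_GLFactor (Vc : I → Submodule K V) (j : I)
    (hc : IsCompl (Vc j) (hatSubmodule Vc j)) : dbl Vc j hc ∈ GLFactor Vc j := by
  constructor
  · apply le_antisymm
    · rintro _ ⟨v, hv, rfl⟩
      have : dbl Vc j hc v = v + v := by rw [dbl_apply, dblProj_left Vc j hc hv]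
      simpa [this] using Submodule.add_mem _ hv hv
    · intro v hv
      refine ⟨(2 : K)⁻¹ • v, Submodule.smul_mem _ _ hv, ?_⟩
      have : dbl Vc j hc ((2 : K)⁻¹ • v) = (2 : K)⁻¹ • v + (2 : K)⁻¹ • v := by
        rw [dbl_apply, dblProj_left Vc j hc (Submodule.smul_mem _ _ hv)]
      rw [show ((dbl Vc j hc : V →ₗ[K] V) ((2 : K)⁻¹ • v)) = dbl Vc j hc ((2 : K)⁻¹ • v) from rfl,
        this, ← two_smul K ((2 : K)⁻¹ • v), smul_smul]
      simp
  · intro x hx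
    rw [dbl_apply, dblProj_right Vc j hc hx, add_zero]

/-- A member of `GLFactor Vc j` fixing a vector forces nothing, but `dbl` fixing a vector
puts it in the hat. -/
lemma dbl_fixed (Vc : I → Submodule K V) (j : I)
    (hc : IsCompl (Vc j) (hatSubmodule Vc j)) {x : V} (hx : dbl Vc j hc x = x) :
    x ∈ hatSubmodule Vc j := by
  rw [dbl_apply] at hx
  exact (dblProj_eq_zero_iff Vc j hc).1 (by linear_combination (norm := abel1) hx)

lemma GLFactor_sub_mem (Vc : I → Submodule K V) (j : I)
    (hc : IsCompl (Vc j) (hatSubmodule Vc j)) {h : V ≃ₗ[K] V} (hh : h ∈ GLFactor Vc j)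
    (y : V) : h y - y ∈ Vc j := by
  obtain ⟨hmap, hfix⟩ := hh
  have hy : y = dblProj Vc j hc y + (y - dblProj Vc j hc y) := by abel
  have hb : y - dblProj Vc j hc y ∈ hatSubmodule Vc j := by
    rw [← dblProj_eq_zero_iff Vc j hc]
    have hpp : dblProj Vc j hc (dblProj Vc j hc y) = dblProj Vc j hc y :=
      dblProj_left Vc j hc (dblProj_mem Vc j hc y)
    simp [map_sub, hpp]
  have ha : dblProj Vc j hc y ∈ Vc j := dblProj_mem Vc j hc y
  have : h y = h (dblProj Vc j hc y) + (y - dblProj Vc j hc y) := by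
    conv_lhs => rw [hy]
    rw [map_add, hfix _ hb]
  rw [this]
  have hha : h (dblProj Vc j hc y) ∈ Vc j := by
    rw [← hmap]; exact ⟨_, ha, rfl⟩
  have : h (dblProj Vc j hc y) + (y - dblProj Vc j hc y) - y
      = h (dblProj Vc j hc y) - dblProj Vc j hc y := by abel
  rw [this]
  exact Submodule.sub_mem _ hha ha

lemma dbl_sub_self (Vc : I → Submodule K V) (j : I)
    (hc : IsCompl (Vc j) (hatSubmodule Vc j)) {v : V} (hv : v ∈ Vc j) :
    dbl Vc j hc v - v = v := by
  rw [dbl_apply, dblProj_left Vc j hc hv]; abel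

/-- Let `K` be a field of characteristic `0` and `V = ⊕_{i ∈ I} V_i` a
finite-dimensional `K`-vector space written as an internal direct sum of subspaces
indexed by a finite set `I`.  For `j ∈ I` write `V̂_j = ⊕_{i ≠ j} V_i`, and embed
`GL(V_j)` into `GL(V)` as the invertible linear maps preserving `V_j` and restricting
to the identity on `V̂_j`.  Then for every `g ∈ GL(V)` and all `j, k ∈ I`:
`g GL(V_j) g⁻¹ = GL(V_k)` if and only if `g(V_j) = V_k` and `g(V̂_j) = V̂_k`. -/
theorem conj_GLFactor_iff [FiniteDimensional K V] (Vc : I → Submodule K V)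
    (hinternal : DirectSum.IsInternal Vc) (g : V ≃ₗ[K] V) (j k : I) :
    (fun h : V ≃ₗ[K] V => (g.symm.trans h).trans g) '' GLFactor Vc j = GLFactor Vc k ↔
      Submodule.map (g : V →ₗ[K] V) (Vc j) = Vc k ∧
        Submodule.map (g : V →ₗ[K] V) (hatSubmodule Vc j) = hatSubmodule Vc k := by
  have hcj := isCompl_hat Vc hinternal j
  have hck := isCompl_hat Vc hinternal k
  constructor
  · intro hS
    -- the doubling map at k is a conjugate of some h ∈ GLFactor j
    obtain ⟨h, hh, hhe⟩ : ∃ h ∈ GLFactor Vc j,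
        (g.symm.trans h).trans g = dbl Vc k hck := by
      have : dbl Vc k hck ∈ GLFactor Vc k := dbl_mem_GLFactor Vc k hck
      rw [← hS] at this
      exact this
    -- and the conjugate of dbl at j is in GLFactor k
    have hdj : (g.symm.trans (dbl Vc j hcj)).trans g ∈ GLFactor Vc k := by
      rw [← hS]; exact ⟨_, dbl_mem_GLFactor Vc j hcj, rfl⟩
    constructor
    · -- g(V_j) = V_k
      apply le_antisymm
      · rintro _ ⟨v, hv, rfl⟩
        -- g v = h' (g v) - g v where h' = g (dbl j) g⁻¹ ∈ GLFactor k
        have key : ((g.symm.trans (dbl Vc j hcj)).trans g) (g v) - g v ∈ Vc k :=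
          GLFactor_sub_mem Vc k hck hdj (g v)
        have : ((g.symm.trans (dbl Vc j hcj)).trans g) (g v) - g v = g v := by
          simp only [LinearEquiv.trans_apply, LinearEquiv.symm_apply_apply]
          rw [← map_sub, dbl_sub_self Vc j hcj hv]
        rwa [this] at key
      · intro w hw
        refine ⟨g.symm w, ?_, by simp⟩
        have key : h (g.symm w) - g.symm w ∈ Vc j := GLFactor_sub_mem Vc j hcj hh _
        have : h (g.symm w) - g.symm w = g.symm w := by
          have := congrArg (fun f : V ≃ₗ[K] V => g.symm (f w)) hhe
          simp only [LinearEquiv.trans_apply, LinearEquiv.symm_apply_apply] at this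
          rw [this, ← map_sub, dbl_sub_self Vc k hck hw]
        rwa [this] at key
    · -- g(hat_j) = hat_k
      apply le_antisymm
      · rintro _ ⟨x, hx, rfl⟩
        -- dbl k fixes g x : dbl k (g x) = g (h x) = g x
        apply dbl_fixed Vc k hck
        rw [← hhe]
        simp only [LinearEquiv.coe_coe, LinearEquiv.trans_apply, LinearEquiv.symm_apply_apply]
        rw [hh.2 x hx]
      · intro y hy
        refine ⟨g.symm y, ?_, by simp⟩
        apply dbl_fixed Vc j hcj
        have := hdj.2 y hy
        simp only [LinearEquiv.trans_apply] at this
        have := congrArg g.symm this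
        simpa using this
  · rintro ⟨hVj, hhat⟩
    ext h'
    simp only [Set.mem_image]
    constructor
    · rintro ⟨h, ⟨hmap, hfix⟩, rfl⟩
      constructor
      · -- map of V_k
        rw [← hVj]
        ext w
        constructor
        · rintro ⟨_, ⟨v, hv, rfl⟩, rfl⟩
          simp only [LinearEquiv.coe_coe, LinearEquiv.trans_apply, LinearEquiv.symm_apply_apply]
          have : h v ∈ Vc j := by rw [← hmap]; exact ⟨v, hv, rfl⟩
          exact ⟨h v, this, rfl⟩
        · rintro ⟨v, hv, rfl⟩
          have : v ∈ Submodule.map (h : V →ₗ[K] V) (Vc j) := by rw [hmap]; exact hv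
          obtain ⟨u, hu, rfl⟩ := this
          exact ⟨g u, ⟨u, hu, rfl⟩, by simp⟩
      · intro x hx
        have : g.symm x ∈ hatSubmodule Vc j := by
          rw [← hhat] at hx
          obtain ⟨y, hy, rfl⟩ := hx
          simpa using hy
        simp only [LinearEquiv.trans_apply]
        rw [hfix _ this]
        simp
    · rintro ⟨hmap, hfix⟩
      refine ⟨(g.trans h').trans g.symm, ⟨?_, ?_⟩, by ext x; simp⟩
      · ext v
        constructor
        · rintro ⟨u, hu, rfl⟩
          simp only [LinearEquiv.coe_coe, LinearEquiv.trans_apply]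
          have hgu : g u ∈ Vc k := by rw [← hVj]; exact ⟨u, hu, rfl⟩
          have : h' (g u) ∈ Vc k := by rw [← hmap]; exact ⟨_, hgu, rfl⟩
          have : h' (g u) ∈ Submodule.map (g : V →ₗ[K] V) (Vc j) := by rw [hVj]; exact this
          obtain ⟨w, hw, hw2⟩ := this
          have : g.symm (h' (g u)) = w := by rw [← hw2]; simp
          rw [this]; exact hw
        · intro hv
          have hgv : g v ∈ Vc k := by rw [← hVj]; exact ⟨v, hv, rfl⟩
          have : g v ∈ Submodule.map (h' : V →ₗ[K] V) (Vc k) := by rw [hmap]; exact hgv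
          obtain ⟨w, hw, hw2⟩ := this
          have hwj : h'.symm (g v) ∈ Vc k := by
            have : h'.symm (g v) = w := by rw [← hw2]; simp
            rw [this]
            exact hw
          have : h'.symm (g v) ∈ Submodule.map (g : V →ₗ[K] V) (Vc j) := by
            rw [hVj]; exact hwj
          obtain ⟨u, hu, hu2⟩ := this
          refine ⟨u, hu, ?_⟩
          simp only [LinearEquiv.coe_coe, LinearEquiv.trans_apply]
          have : g u = h'.symm (g v) := hu2
          rw [this]
          simp
      · intro x hx
        have hgx : g x ∈ hatSubmodule Vc k := by rw [← hhat]; exact ⟨x, hx, rfl⟩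
        simp only [LinearEquiv.trans_apply]
        rw [hfix _ hgx]
        simp
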